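/- In the setting of the 3-element demonic meet semigroup S = {z, e, g}, for any representation θ of S by binary relations on a base X (ordinary composition for ∘, demonic meet for ·, injective θ), the relation g^θ \ z^θ restricted as follows is irreflexive and transitive-like enough to force infinitude: specifically, there exist, for every n, n distinct points y₀, …, y_{n−1} in X such that (y_j, y_i) ∈ g^θ for all i < j and (y_i, y_i) ∉ g^θ for all i. Hence every representation of S has an infinite base. -/

import Mathlib

def dom {X : Type*} (R : Set (X × X)) : Set X := {x | ∃ y, (x, y) ∈ R}

def restr {X : Type*} (R : Set (X × X)) (D : Set X) : Set (X × X) := {p ∈ R | p.1 ∈ D}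

def djoin {X : Type*} (R S : Set (X × X)) : Set (X × X) := restr (R ∪ S) (dom R ∩ dom S)

def dref {X : Type*} (R S : Set (X × X)) : Prop := dom S ⊆ dom R ∧ restr R (dom S) ⊆ S

def dmeet {X : Type*} (R S : Set (X × X)) : Set (X × X) :=
  (R ∩ S) ∪ restr R (dom S)ᶜ ∪ restr S (dom R)ᶜ

def rcomp {X : Type*} (R S : Set (X × X)) : Set (X × X) :=
  {p | ∃ y, (p.1, y) ∈ R ∧ (y, p.2) ∈ S}

def dcomp {X : Type*} (R S : Set (X × X)) : Set (X × X) :=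
  {p ∈ rcomp R S | ∀ z, (p.1, z) ∈ R → z ∈ dom S}

def ran {X : Type*} (R : Set (X × X)) : Set X := {y | ∃ x, (x, y) ∈ R}

def ext {X : Type*} (R : Set (X × X)) : Set ((X ⊕ Unit) × (X ⊕ Unit)) :=
  {p | ∃ x y, (x, y) ∈ R ∧ p = (Sum.inl x, Sum.inl y)} ∪
  {p | ∃ x, x ∈ dom R ∧ p = (Sum.inl x, Sum.inr ())}

inductive PA where
  | z : PA
  | e : PA
  | g : PA

def pmul : PA → PA → PA
  | .z, _ => .z
  | _, .z => .z
  | .e, .e => .e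
  | .g, .g => .g
  | .e, .g => .z
  | .g, .e => .z

def pcmp : PA → PA → PA
  | .z, _ => .z
  | _, .z => .z
  | .e, .e => .e
  | .e, .g => .g
  | .g, .e => .g
  | .g, .g => .g

theorem stmt16 {X : Type*} (θ : PA → Set (X × X))
    (hcmp : ∀ a b : PA, θ (pcmp a b) = rcomp (θ a) (θ b))
    (hmul : ∀ a b : PA, θ (pmul a b) = dmeet (θ a) (θ b))
    (hinj : Function.Injective θ) :
    (∀ n : ℕ, ∃ y : Fin n → X, Function.Injective y ∧
      (∀ i j : Fin n, i < j → (y j, y i) ∈ θ .g) ∧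
      (∀ i : Fin n, (y i, y i) ∉ θ .g)) ∧ Infinite X := by
  classical
  have hGG : θ PA.g = rcomp (θ PA.g) (θ PA.g) := hcmp .g .g
  have hEG : θ PA.g = rcomp (θ PA.e) (θ PA.g) := hcmp .e .g
  have hGE : θ PA.g = rcomp (θ PA.g) (θ PA.e) := hcmp .g .e
  have hEE : θ PA.e = rcomp (θ PA.e) (θ PA.e) := hcmp .e .e
  have hZG : θ PA.z = rcomp (θ PA.z) (θ PA.g) := hcmp .z .g
  have hGZ : θ PA.z = rcomp (θ PA.g) (θ PA.z) := hcmp .g .z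
  have hm : θ PA.z = dmeet (θ PA.e) (θ PA.g) := hmul .e .g
  have hZEm : θ PA.z = dmeet (θ PA.z) (θ PA.e) := hmul .z .e
  -- dom facts
  have hdZG : ∀ x y, (x, y) ∈ θ PA.z → x ∈ dom (θ PA.g) := by
    intro x y h
    rw [hGZ] at h
    obtain ⟨w, h1, _⟩ := h
    exact ⟨w, h1⟩
  have hdGE : ∀ x y, (x, y) ∈ θ PA.g → x ∈ dom (θ PA.e) := by
    intro x y h
    rw [hEG] at h
    obtain ⟨w, h1, _⟩ := h
    exact ⟨w, h1⟩
  -- Z ⊆ E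
  have hZE : ∀ x y, (x, y) ∈ θ PA.z → (x, y) ∈ θ PA.e := by
    intro x y h
    have hx : x ∈ dom (θ PA.e) := by
      obtain ⟨w, hw⟩ := hdZG x y h
      exact hdGE x w hw
    have h' := h
    rw [hZEm] at h'
    rcases h' with (⟨_, h2⟩ | ⟨_, h2⟩) | ⟨h1, h2⟩
    · exact h2
    · exact absurd hx h2
    · exact absurd ⟨y, h⟩ h2
  have hEGZ : ∀ x y, (x, y) ∈ θ PA.e → (x, y) ∈ θ PA.g → (x, y) ∈ θ PA.z := by
    intro x y h1 h2
    rw [hm]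
    exact Or.inl (Or.inl ⟨h1, h2⟩)
  have lemA : ∀ p q, (p, p) ∈ θ PA.g → (p, q) ∈ θ PA.g → (p, q) ∈ θ PA.e := by
    intro p q hpp hpq
    have h := hpq
    rw [hEG] at h
    obtain ⟨w, hw1, hw2⟩ := h
    have hpwG : (p, w) ∈ θ PA.g := by rw [hGE]; exact ⟨p, hpp, hw1⟩
    have hpwZ : (p, w) ∈ θ PA.z := hEGZ p w hw1 hpwG
    have : (p, q) ∈ θ PA.z := by rw [hZG]; exact ⟨w, hpwZ, hw2⟩
    exact hZE _ _ this
  have lemB : ∀ p q, (q, q) ∈ θ PA.g → (p, q) ∈ θ PA.g → (p, q) ∈ θ PA.e := by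
    intro p q hqq hpq
    have hqqZ : (q, q) ∈ θ PA.z := hEGZ q q (lemA q q hqq hqq) hqq
    have : (p, q) ∈ θ PA.z := by rw [hGZ]; exact ⟨q, hpq, hqqZ⟩
    exact hZE _ _ this
  have irr : ∀ a b, (a, b) ∈ θ PA.g → (a, b) ∉ θ PA.e →
      (a, a) ∉ θ PA.g ∧ (b, b) ∉ θ PA.g := by
    intro a b h hn
    exact ⟨fun haa => hn (lemA a b haa h), fun hbb => hn (lemB a b hbb h)⟩
  -- existence of a G \ E pair
  have hex : ∃ a b, (a, b) ∈ θ PA.g ∧ (a, b) ∉ θ PA.e := by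
    by_contra hc
    push_neg at hc
    have hZeqG : θ PA.z = θ PA.g := by
      apply Set.eq_of_subset_of_subset
      · rintro ⟨x, y⟩ hp
        have hp' := hp
        rw [hm] at hp'
        rcases hp' with (⟨_, h2⟩ | ⟨_, h2⟩) | ⟨h1, _⟩
        · exact h2
        · exact absurd (hdZG x y hp) h2
        · exact h1
      · rintro ⟨x, y⟩ hp
        rw [hm]
        exact Or.inl (Or.inl ⟨hc x y hp, hp⟩)
    exact PA.noConfusion (hinj hZeqG)
  have gtr : ∀ a b c, (a, b) ∈ θ PA.g → (b, c) ∈ θ PA.g → (a, c) ∈ θ PA.g := by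
    intro a b c h1 h2
    rw [hGG]
    exact ⟨b, h1, h2⟩
  have etr : ∀ a b c, (a, b) ∈ θ PA.e → (b, c) ∈ θ PA.e → (a, c) ∈ θ PA.e := by
    intro a b c h1 h2
    rw [hEE]
    exact ⟨b, h1, h2⟩
  have hsplit : ∀ a b, (a, b) ∈ θ PA.g → (a, b) ∉ θ PA.e →
      ∃ w, (a, w) ∈ θ PA.g ∧ (w, b) ∈ θ PA.g ∧ ((a, w) ∉ θ PA.e ∨ (w, b) ∉ θ PA.e) := by
    intro a b hab hnab
    have h := hab
    rw [hGG] at h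
    obtain ⟨w, h1, h2⟩ := h
    refine ⟨w, h1, h2, ?_⟩
    by_contra hc
    push_neg at hc
    exact hnab (etr a w b hc.1 hc.2)
  set rG : X → X → Prop := fun u v => (u, v) ∈ θ PA.g with hrG
  -- insertion lemma
  have ins : ∀ (m : List X) (a b : X), List.Chain' rG (a :: (m ++ [b])) →
      (a, b) ∉ θ PA.e → ∃ m' : List X, m'.length = m.length + 1 ∧
        List.Chain' rG (a :: (m' ++ [b])) ∧
        (∀ x ∈ m', x ∈ m ∨ (x, x) ∉ θ PA.g) := by
    intro m
    induction m with
    | nil =>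
      intro a b hch hne
      have hab : rG a b := by
        simp only [List.nil_append, List.Chain', List.isChain_cons_cons, List.isChain_singleton, and_true] at hch
        exact hch
      obtain ⟨w, h1, h2, h3⟩ := hsplit a b hab hne
      refine ⟨[w], rfl, ?_, ?_⟩
      · simp only [List.cons_append, List.nil_append, List.Chain', List.isChain_cons_cons, List.isChain_singleton,
          and_true]
        exact ⟨h1, h2⟩
      · intro x hx
        rcases List.mem_singleton.mp hx with rfl
        right
        rcases h3 with h3 | h3
        · exact (irr a x h1 h3).2
        · exact (irr x b h2 h3).1
    | cons c m'' IH =>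
      intro a b hch hne
      simp only [List.cons_append, List.Chain', List.isChain_cons_cons] at hch
      obtain ⟨hac, hch2⟩ := hch
      by_cases hEac : (a, c) ∈ θ PA.e
      · have hcb : (c, b) ∉ θ PA.e := fun h => hne (etr a c b hEac h)
        obtain ⟨m₂, hlen, hch3, hmem⟩ := IH c b hch2 hcb
        refine ⟨c :: m₂, by simp [hlen], ?_, ?_⟩
        · simp only [List.cons_append, List.Chain', List.isChain_cons_cons]
          exact ⟨hac, hch3⟩
        · intro x hx
          rcases List.mem_cons.mp hx with rfl | hx
          · exact Or.inl (List.mem_cons_self)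
          · rcases hmem x hx with h | h
            · exact Or.inl (List.mem_cons_of_mem _ h)
            · exact Or.inr h
      · obtain ⟨w, h1, h2, h3⟩ := hsplit a c hac hEac
        refine ⟨w :: c :: m'', by simp, ?_, ?_⟩
        · simp only [List.cons_append, List.Chain', List.isChain_cons_cons]
          exact ⟨h1, h2, hch2⟩
        · intro x hx
          rcases List.mem_cons.mp hx with rfl | hx
          · right
            rcases h3 with h3 | h3
            · exact (irr a x h1 h3).2
            · exact (irr x c h2 h3).1
          · exact Or.inl hx
  -- main chain construction
  have main : ∀ n : ℕ, ∃ (a b : X) (m : List X), m.length = n ∧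
      List.Chain' rG (a :: (m ++ [b])) ∧ (a, b) ∉ θ PA.e ∧
      (∀ x ∈ a :: (m ++ [b]), (x, x) ∉ θ PA.g) := by
    intro n
    induction n with
    | zero =>
      obtain ⟨a, b, hab, hnab⟩ := hex
      refine ⟨a, b, [], rfl, ?_, hnab, ?_⟩
      · simp only [List.nil_append, List.Chain', List.isChain_cons_cons, List.isChain_singleton, and_true]
        exact hab
      · intro x hx
        simp only [List.nil_append, List.mem_cons, List.not_mem_nil, or_false] at hx
        rcases hx with rfl | rfl
        · exact (irr x b hab hnab).1
        · exact (irr a x hab hnab).2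
    | succ n IH =>
      obtain ⟨a, b, m, hlen, hch, hnab, hirr⟩ := IH
      obtain ⟨m', hlen', hch', hmem⟩ := ins m a b hch hnab
      refine ⟨a, b, m', by omega, hch', hnab, ?_⟩
      intro x hx
      rcases List.mem_cons.mp hx with rfl | hx
      · exact hirr x (List.mem_cons_self)
      · rcases List.mem_append.mp hx with hx | hx
        · rcases hmem x hx with h | h
          · exact hirr x (List.mem_cons_of_mem _ (List.mem_append_left _ h))
          · exact h
        · exact hirr x (List.mem_cons_of_mem _ (List.mem_append_right _ hx))
  have key : ∀ n : ℕ, ∃ y : Fin n → X, Function.Injective y ∧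
      (∀ i j : Fin n, i < j → (y j, y i) ∈ θ PA.g) ∧
      (∀ i : Fin n, (y i, y i) ∉ θ PA.g) := by
    intro n
    obtain ⟨a, b, m, hlen, hch, _, hirr⟩ := main n
    set l : List X := a :: (m ++ [b]) with hl
    have hlength : l.length = n + 2 := by simp [hl, hlen]
    haveI : IsTrans X rG := ⟨fun a b c => gtr a b c⟩
    have hpw : List.Pairwise rG l := List.isChain_iff_pairwise.mp hch
    have hget := List.pairwise_iff_get.mp hpw
    have hidx : ∀ i : Fin n, n + 1 - (i : ℕ) < l.length := by
      intro i
      omega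
    refine ⟨fun i => l.get ⟨n + 1 - (i : ℕ), hidx i⟩, ?_, ?_, ?_⟩
    · intro i j hij
      simp only at hij
      by_contra hne
      rcases Ne.lt_or_gt hne with h | h
      · have hlt : (⟨n + 1 - (j : ℕ), hidx j⟩ : Fin l.length) < ⟨n + 1 - (i : ℕ), hidx i⟩ := by
          have h1 := j.isLt
          have h2 : (i : ℕ) < (j : ℕ) := h
          simp only [Fin.mk_lt_mk]
          omega
        have hG := hget _ _ hlt
        rw [hij] at hG
        exact hirr _ (List.get_mem _ _) hG
      · have hlt : (⟨n + 1 - (i : ℕ), hidx i⟩ : Fin l.length) < ⟨n + 1 - (j : ℕ), hidx j⟩ := by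
          have h1 := i.isLt
          have h2 : (j : ℕ) < (i : ℕ) := h
          simp only [Fin.mk_lt_mk]
          omega
        have hG := hget _ _ hlt
        rw [← hij] at hG
        exact hirr _ (List.get_mem _ _) hG
    · intro i j hij
      have hij' : (i : ℕ) < (j : ℕ) := hij
      have hjn : (j : ℕ) < n := j.isLt
      exact hget ⟨n + 1 - (j : ℕ), hidx j⟩ ⟨n + 1 - (i : ℕ), hidx i⟩
        (by simp only [Fin.mk_lt_mk]; omega)
    · intro i
      exact hirr _ (List.get_mem _ _)
  refine ⟨key, ?_⟩
  by_contra hfin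
  rw [not_infinite_iff_finite] at hfin
  haveI := hfin
  haveI := Fintype.ofFinite X
  obtain ⟨y, hyinj, -, -⟩ := key (Fintype.card X + 1)
  have hcard := Fintype.card_le_of_injective y hyinj
  simp [Fintype.card_fin] at hcard
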